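/- arXiv:2501.07692 — 3 statements merged into one kernel-verified Lean document; each statement's English description precedes it below -/
import Mathlib

section
/- For all integers d ≥ 2 and n ≥ 0, the generalized Euler number ℰ_n^{(d)} (a priori a rational number) is an integer. -/
/-- The generalized Euler number `ℰ_n^{(d)}`: `n!` times the coefficient of `x^n` in the
multiplicative inverse of the formal power series `∑_{k≥0} x^{dk}/(dk)!` over `ℚ`. -/
noncomputable def genEulerQ (d n : ℕ) : ℚ :=
  (n.factorial : ℚ) *
    PowerSeries.coeff n
      (PowerSeries.mk fun m => if d ∣ m then (1 : ℚ) / m.factorial else 0)⁻¹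

theorem stmt_6 (d n : ℕ) (hd : 2 ≤ d) : ∃ z : ℤ, genEulerQ d n = (z : ℚ) := by
  have main : genEulerQ d n ∈ (Int.castRingHom ℚ).range := by
    set φ : PowerSeries ℚ :=
      PowerSeries.mk fun m => if d ∣ m then (1 : ℚ) / m.factorial else 0 with hφ
    have hc : PowerSeries.constantCoeff φ = 1 := by
      simp [hφ]
    induction n using Nat.strong_induction_on with
    | _ n ih =>
      rcases Nat.eq_zero_or_pos n with rfl | hn
      · refine ⟨1, ?_⟩
        simp [genEulerQ, ← hφ, PowerSeries.coeff_zero_eq_constantCoeff, hc]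
      · have key : genEulerQ d n = -∑ p ∈ Finset.HasAntidiagonal.antidiagonal n,
            (if p.2 < n then
              (if d ∣ p.1 then (n.choose p.1 : ℚ) * genEulerQ d p.2 else 0) else 0) := by
          rw [genEulerQ, ← hφ, PowerSeries.coeff_inv, if_neg hn.ne', hc, inv_one,
            neg_one_mul, mul_neg, Finset.mul_sum, neg_inj]
          refine Finset.sum_congr rfl fun p hp => ?_
          rw [Finset.HasAntidiagonal.mem_antidiagonal] at hp
          split_ifs with h1 h2
          · rw [PowerSeries.coeff_mk, if_pos h2, genEulerQ, ← hφ]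
            have hfact : (n.factorial : ℚ) =
                (n.choose p.1 : ℚ) * p.1.factorial * p.2.factorial := by
              have h := Nat.add_choose_mul_factorial_mul_factorial p.2 p.1
              rw [← hp]
              norm_cast
              rw [add_comm p.1 p.2, ← h]
              ring
            rw [hfact]
            have h3 : (p.1.factorial : ℚ) ≠ 0 := Nat.cast_ne_zero.2 p.1.factorial_ne_zero
            field_simp
          · rw [PowerSeries.coeff_mk, if_neg h2]
            ring
          · ring
        rw [key]
        refine neg_mem (sum_mem fun p hp => ?_)
        split_ifs with h1 h2
        · exact mul_mem ⟨n.choose p.1, by simp⟩ (ih p.2 h1)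
        · exact zero_mem _
        · exact zero_mem _
  obtain ⟨z, hz⟩ := main
  exact ⟨z, hz.symm⟩
end

section
/- For every prime p and every integer n ≥ 0, the generalized Euler number satisfies the congruence ℰ_{pn}^{(p)} ≡ (-1)^n (mod p²). -/
open Finset PowerSeries

/-- Integer sequence defined by the recursion satisfied by `ℰ_{pn}^{(p)}`. -/
private def genE (p : ℕ) : ℕ → ℤ
  | n =>
    if n = 0 then 1
    else -∑ k ∈ (Finset.range n).attach,
      (((p * n).choose (p * (k : ℕ)) : ℤ) * genE p k)
  decreasing_by exact Finset.mem_range.mp k.2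

private lemma genE_eq (p n : ℕ) :
    genE p n = if n = 0 then 1
      else -∑ k ∈ Finset.range n, (((p * n).choose (p * k) : ℤ) * genE p k) := by
  rw [genE]
  congr 1
  exact congrArg Neg.neg
    (Finset.sum_attach (Finset.range n) (fun k => ((p * n).choose (p * k) : ℤ) * genE p k))

private lemma dvd_choose_p {p : ℕ} (hp : p.Prime) (n m : ℕ) (hm : ¬ p ∣ m) :
    p ∣ (p * n).choose m := by
  rcases le_or_gt m (p * n) with h | h
  · have hm0 : m ≠ 0 := by rintro rfl; exact hm (dvd_zero p)
    have h1 : 1 ≤ p * n := le_trans (Nat.one_le_iff_ne_zero.2 hm0) h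
    have key := Nat.add_one_mul_choose_eq (p * n - 1) (m - 1)
    rw [Nat.sub_add_cancel h1,
      Nat.sub_add_cancel (Nat.one_le_iff_ne_zero.2 hm0)] at key
    have : p ∣ (p * n).choose m * m := by
      rw [← key]; exact Dvd.dvd.mul_right (Dvd.intro n rfl) _
    rcases (Nat.Prime.dvd_mul hp).1 this with h' | h'
    · exact h'
    · exact absurd h' hm
  · rw [Nat.choose_eq_zero_of_lt h]
    exact dvd_zero p

private lemma psq_zero (p : ℕ) {a b : ℕ} (ha : p ∣ a) (hb : p ∣ b) :
    ((a * b : ℕ) : ZMod (p ^ 2)) = 0 := by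
  obtain ⟨x, rfl⟩ := ha
  obtain ⟨y, rfl⟩ := hb
  push_cast
  have h : ((p ^ 2 : ℕ) : ZMod (p ^ 2)) = 0 := ZMod.natCast_self _
  push_cast at h
  calc (p : ZMod (p ^ 2)) * x * ((p : ZMod (p ^ 2)) * y)
      = (p : ZMod (p ^ 2)) ^ 2 * (x * y) := by ring
    _ = 0 := by rw [h]; ring

/-- The key binomial congruence `C(pn, pk) ≡ C(n, k) (mod p²)`. -/
private lemma choose_cong {p : ℕ} (hp : p.Prime) :
    ∀ n k : ℕ, (((p * n).choose (p * k) : ℕ) : ZMod (p ^ 2)) = ((n.choose k : ℕ) : ZMod (p ^ 2)) := by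
  intro n
  induction n with
  | zero =>
    intro k
    rcases Nat.eq_zero_or_pos k with rfl | hk
    · simp
    · rw [Nat.mul_zero, Nat.choose_eq_zero_of_lt (Nat.mul_pos hp.pos hk),
        Nat.choose_eq_zero_of_lt hk]
  | succ n ih =>
    intro k
    rcases Nat.eq_zero_or_pos k with rfl | hk
    · simp
    have hpk : p ≤ p * k := Nat.le_mul_of_pos_right p hk
    have hv : (p * (n + 1)).choose (p * k) =
        ∑ i ∈ range (p * k + 1), p.choose i * (p * n).choose (p * k - i) := by
      have h1 : p * (n + 1) = p + p * n := by ring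
      rw [h1, Nat.add_choose_eq, Finset.Nat.sum_antidiagonal_eq_sum_range_succ_mk]
    rw [hv, Nat.cast_sum]
    have hsub : ({0, p} : Finset ℕ) ⊆ range (p * k + 1) := by
      intro i hi
      rcases Finset.mem_insert.mp hi with rfl | hi
      · simp
      · rw [Finset.mem_singleton] at hi
        subst hi
        exact Finset.mem_range.mpr (Nat.lt_succ_of_le hpk)
    rw [← Finset.sum_subset hsub (by
      intro i _ hi
      rcases lt_trichotomy i p with hip | rfl | hip
      · have hi0 : i ≠ 0 := by
          intro h; exact hi (by simp [h])
        have d1 : p ∣ p.choose i := hp.dvd_choose_self hi0 hip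
        have d2 : p ∣ (p * n).choose (p * k - i) := by
          apply dvd_choose_p hp
          intro hd
          have hile : i ≤ p * k := le_trans hip.le hpk
          have hpi : p ∣ i := by
            have h3 := Nat.dvd_sub (Dvd.intro k rfl) hd
            rwa [Nat.sub_sub_self hile] at h3
          have := Nat.le_of_dvd (Nat.pos_of_ne_zero hi0) hpi
          omega
        exact psq_zero p d1 d2
      · exact absurd (by simp) hi
      · rw [Nat.choose_eq_zero_of_lt hip, Nat.zero_mul, Nat.cast_zero])]
    rw [Finset.sum_pair (Ne.symm hp.ne_zero)]
    have hsub2 : p * k - p = p * (k - 1) := by rw [Nat.mul_sub, Nat.mul_one]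
    obtain ⟨k', rfl⟩ : ∃ k', k = k' + 1 := ⟨k - 1, by omega⟩
    simp only [Nat.add_sub_cancel] at hsub2
    simp only [Nat.choose_zero_right, Nat.choose_self, one_mul, Nat.sub_zero, hsub2]
    rw [ih (k' + 1), ih k', Nat.choose_succ_succ n k']
    push_cast
    ring

/-- `genE p n ≡ (-1)^n (mod p²)`. -/
private lemma genE_cong {p : ℕ} (hp : p.Prime) :
    ∀ n : ℕ, ((genE p n : ℤ) : ZMod (p ^ 2)) = (-1) ^ n := by
  intro n
  induction n using Nat.strong_induction_on with
  | _ n ih =>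
    rcases Nat.eq_zero_or_pos n with rfl | hn
    · rw [genE_eq]; simp
    have hne : n ≠ 0 := Nat.pos_iff_ne_zero.mp hn
    have key := congrArg (Int.cast : ℤ → ZMod (p ^ 2))
      (Int.alternating_sum_range_choose_of_ne hne)
    push_cast at key
    rw [Finset.sum_range_succ, Nat.choose_self, Nat.cast_one, mul_one] at key
    rw [genE_eq, if_neg hne]
    push_cast
    have hterm : ∀ k ∈ range n,
        (((p * n).choose (p * k) : ℕ) : ZMod (p ^ 2)) * ((genE p k : ℤ) : ZMod (p ^ 2)) =
          (-1 : ZMod (p ^ 2)) ^ k * ((n.choose k : ℕ) : ZMod (p ^ 2)) := by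
      intro k hk
      rw [choose_cong hp n k, ih k (Finset.mem_range.mp hk)]
      ring
    rw [Finset.sum_congr rfl hterm]
    linear_combination -key

private noncomputable def Fser (p : ℕ) : PowerSeries ℚ :=
  PowerSeries.mk fun m => if p ∣ m then (1 : ℚ) / m.factorial else 0

private lemma genEulerQ_eq_Fser (p m : ℕ) :
    genEulerQ p m = (m.factorial : ℚ) * PowerSeries.coeff m (Fser p)⁻¹ := rfl

private lemma coeff_inv_eq {p : ℕ} (hp : p.Prime) :
    ∀ m : ℕ, (m.factorial : ℚ) * PowerSeries.coeff m (Fser p)⁻¹ =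
      if p ∣ m then ((genE p (m / p) : ℤ) : ℚ) else 0 := by
  have hconst : PowerSeries.constantCoeff (Fser p) = 1 := by
    simp [Fser, ← PowerSeries.coeff_zero_eq_constantCoeff, PowerSeries.coeff_mk]
  intro m
  induction m using Nat.strong_induction_on with
  | _ m ih =>
    rcases Nat.eq_zero_or_pos m with rfl | hm
    · rw [if_pos (dvd_zero p)]
      rw [Nat.zero_div, PowerSeries.coeff_zero_eq_constantCoeff, PowerSeries.constantCoeff_inv,
        hconst, genE_eq]
      norm_num
    have hmne : m ≠ 0 := Nat.pos_iff_ne_zero.mp hm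
    have hmul := PowerSeries.mul_inv_cancel (Fser p) (by rw [hconst]; exact one_ne_zero)
    have h0 := congrArg (PowerSeries.coeff m) hmul
    rw [PowerSeries.coeff_mul, PowerSeries.coeff_one, if_neg hmne,
      Finset.Nat.sum_antidiagonal_eq_sum_range_succ_mk, Finset.sum_range_succ'] at h0
    simp only [Nat.sub_zero] at h0
    have hc0 : PowerSeries.coeff 0 (Fser p) = 1 := by
      rw [PowerSeries.coeff_zero_eq_constantCoeff]; exact hconst
    rw [hc0, one_mul] at h0
    have hcoeff : PowerSeries.coeff m (Fser p)⁻¹ =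
        -∑ i ∈ range m, PowerSeries.coeff (i + 1) (Fser p) *
          PowerSeries.coeff (m - (i + 1)) (Fser p)⁻¹ := by linarith [h0.le, h0.ge]
    have hterm : ∀ i ∈ range m,
        (m.factorial : ℚ) * (PowerSeries.coeff (i + 1) (Fser p) *
          PowerSeries.coeff (m - (i + 1)) (Fser p)⁻¹) =
        if p ∣ (i + 1) ∧ p ∣ (m - (i + 1)) then
          ((m.choose (i + 1) : ℚ) * ((genE p ((m - (i + 1)) / p) : ℤ) : ℚ)) else 0 := by
      intro i hi
      have hi' : i + 1 ≤ m := Finset.mem_range.mp hi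
      rw [show PowerSeries.coeff (i + 1) (Fser p) =
        (if p ∣ (i + 1) then (1 : ℚ) / (i + 1).factorial else 0) from PowerSeries.coeff_mk _ _]
      by_cases hd : p ∣ (i + 1)
      · rw [if_pos hd]
        have ihv := ih (m - (i + 1)) (by omega)
        by_cases hd2 : p ∣ (m - (i + 1))
        · rw [if_pos (And.intro hd hd2)]
          rw [if_pos hd2] at ihv
          have hfne : ((m - (i + 1)).factorial : ℚ) ≠ 0 :=
            Nat.cast_ne_zero.mpr (Nat.factorial_ne_zero _)
          have hfne2 : ((i + 1).factorial : ℚ) ≠ 0 :=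
            Nat.cast_ne_zero.mpr (Nat.factorial_ne_zero _)
          have hinv : PowerSeries.coeff (m - (i + 1)) (Fser p)⁻¹ =
              ((genE p ((m - (i + 1)) / p) : ℤ) : ℚ) / ((m - (i + 1)).factorial : ℚ) := by
            rw [eq_div_iff hfne, mul_comm]
            exact ihv
          rw [hinv, Nat.cast_choose ℚ hi']
          field_simp
        · rw [if_neg (fun h => hd2 h.2)]
          rw [if_neg hd2] at ihv
          have hfne : ((m - (i + 1)).factorial : ℚ) ≠ 0 :=
            Nat.cast_ne_zero.mpr (Nat.factorial_ne_zero _)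
          have : PowerSeries.coeff (m - (i + 1)) (Fser p)⁻¹ = 0 :=
            (mul_eq_zero.mp ihv).resolve_left hfne
          rw [this]
          ring
      · rw [if_neg hd, if_neg (fun h => hd h.1)]
        ring
    have hsum : (m.factorial : ℚ) * PowerSeries.coeff m (Fser p)⁻¹ =
        -∑ i ∈ range m, (if p ∣ (i + 1) ∧ p ∣ (m - (i + 1)) then
          ((m.choose (i + 1) : ℚ) * ((genE p ((m - (i + 1)) / p) : ℤ) : ℚ)) else 0) := by
      rw [hcoeff, mul_neg, Finset.mul_sum]
      exact congrArg Neg.neg (Finset.sum_congr rfl hterm)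
    by_cases hpm : p ∣ m
    · rw [if_pos hpm]
      obtain ⟨n, rfl⟩ := hpm
      have hn : 0 < n := by
        rcases Nat.eq_zero_or_pos n with rfl | h
        · simp at hm
        · exact h
      have hdiv : p * n / p = n := Nat.mul_div_cancel_left n hp.pos
      rw [hdiv, hsum]
      have himg : ∀ i ∈ range (p * n), i ∉ (range n).image (fun k => p * n - (p * k + 1)) →
          (if p ∣ (i + 1) ∧ p ∣ (p * n - (i + 1)) then
            (((p * n).choose (i + 1) : ℚ) * ((genE p ((p * n - (i + 1)) / p) : ℤ) : ℚ)) else 0)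
            = 0 := by
        intro i hi hni
        rw [if_neg]
        rintro ⟨h1, h2⟩
        apply hni
        obtain ⟨k, hk⟩ := h2
        have him : i + 1 ≤ p * n := Finset.mem_range.mp hi
        have hkn : k < n := by
          have : p * k < p * n := by omega
          exact lt_of_mul_lt_mul_left this (Nat.zero_le p)
        refine Finset.mem_image.mpr ⟨k, Finset.mem_range.mpr hkn, ?_⟩
        omega
      rw [← Finset.sum_subset (Finset.subset_iff.mpr ?_) himg]
      rotate_left
      · intro i hi
        obtain ⟨k, hk, rfl⟩ := Finset.mem_image.mp hi
        have hkn : k < n := Finset.mem_range.mp hk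
        have hkm : p * k < p * n := Nat.mul_lt_mul_of_pos_left hkn hp.pos
        exact Finset.mem_range.mpr (by omega)
      rw [Finset.sum_image ?inj]
      case inj =>
        intro a ha b hb hab
        have haa : p * a < p * n := Nat.mul_lt_mul_of_pos_left (Finset.mem_range.mp ha) hp.pos
        have hbb : p * b < p * n := Nat.mul_lt_mul_of_pos_left (Finset.mem_range.mp hb) hp.pos
        have : p * a = p * b := by simp only at hab; omega
        exact Nat.eq_of_mul_eq_mul_left hp.pos this
      have hterm2 : ∀ k ∈ range n,
          (if p ∣ (p * n - (p * k + 1) + 1) ∧ p ∣ (p * n - (p * n - (p * k + 1) + 1)) then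
            (((p * n).choose (p * n - (p * k + 1) + 1) : ℚ) *
              ((genE p ((p * n - (p * n - (p * k + 1) + 1)) / p) : ℤ) : ℚ)) else 0)
          = ((p * n).choose (p * k) : ℚ) * ((genE p k : ℤ) : ℚ) := by
        intro k hk
        have hkn : k < n := Finset.mem_range.mp hk
        have hkm : p * k < p * n := Nat.mul_lt_mul_of_pos_left hkn hp.pos
        have e1 : p * n - (p * k + 1) + 1 = p * n - p * k := by omega
        have e2 : p * n - (p * n - (p * k + 1) + 1) = p * k := by omega
        have e3 : p * n - p * k = p * (n - k) := (Nat.mul_sub p n k).symm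
        rw [e2, e1]
        rw [if_pos ⟨e3 ▸ dvd_mul_right p (n - k), dvd_mul_right p k⟩]
        rw [Nat.mul_div_cancel_left k hp.pos,
          Nat.choose_symm (by omega : p * k ≤ p * n)]
      rw [Finset.sum_congr rfl hterm2]
      rw [genE_eq p n, if_neg (Nat.pos_iff_ne_zero.mp hn)]
      push_cast
      ring
    · rw [if_neg hpm, hsum]
      have : ∀ i ∈ range m, (if p ∣ (i + 1) ∧ p ∣ (m - (i + 1)) then
          ((m.choose (i + 1) : ℚ) * ((genE p ((m - (i + 1)) / p) : ℤ) : ℚ)) else 0) = 0 := by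
        intro i hi
        rw [if_neg]
        rintro ⟨h1, h2⟩
        apply hpm
        have him : i + 1 ≤ m := Finset.mem_range.mp hi
        have := Nat.dvd_add h1 h2
        rwa [Nat.add_sub_cancel' him] at this
      rw [Finset.sum_congr rfl this, Finset.sum_const_zero, neg_zero]

theorem stmt_12 (p n : ℕ) (hp : p.Prime) :
    ∃ z : ℤ, genEulerQ p (p * n) = (z : ℚ) ∧ z ≡ (-1) ^ n [ZMOD (p ^ 2)] := by
  refine ⟨genE p n, ?_, ?_⟩
  · have h := coeff_inv_eq hp (p * n)
    rw [if_pos (dvd_mul_right p n), Nat.mul_div_cancel_left n hp.pos] at h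
    rw [genEulerQ_eq_Fser, h]
  · have h := genE_cong hp n
    have h2 : (((-1 : ℤ) ^ n : ℤ) : ZMod (p ^ 2)) = (-1) ^ n := by push_cast; ring
    rw [← h2] at h
    exact (ZMod.intCast_eq_intCast_iff _ _ _).mp h
end

section
/- For all integers d ≥ 2 and n ≥ 1, the generalized Euler number is given by the determinant formula ℰ_{dn}^{(d)} = (-1)^n · (dn)! · det(M), where M is the n×n matrix whose (i,j) entry (for 1 ≤ i, j ≤ n) is 1/((i-j+1)d)! if i-j+1 ≥ 0 and 0 if i-j+1 < 0. -/
open Finset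

namespace Stmt14Aux

noncomputable def F (d : ℕ) : PowerSeries ℚ :=
  PowerSeries.mk fun m => if d ∣ m then (1 : ℚ) / m.factorial else 0

def e (d i j : ℕ) : ℚ :=
  if j ≤ i + 1 then (1 : ℚ) / (Nat.factorial ((i + 1 - j) * d)) else 0

noncomputable def A (d n : ℕ) : Matrix (Fin n) (Fin n) ℚ :=
  Matrix.of fun i j : Fin n =>
    if (j : ℕ) ≤ (i : ℕ) + 1 then
      (1 : ℚ) / (Nat.factorial (((i : ℕ) + 1 - (j : ℕ)) * d))
    else 0

lemma A_apply (d n : ℕ) (i j : Fin n) : A d n i j = e d i j := rfl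

lemma e_shift (d i j : ℕ) : e d (i+1) (j+1) = e d i j := by
  simp [e, Nat.succ_sub_succ, Nat.add_le_add_iff_right]

lemma succAbove_val {n : ℕ} (p : Fin (n+1)) (i : Fin n) :
    ((p.succAbove i : Fin (n+1)) : ℕ) = if (i : ℕ) < (p : ℕ) then (i : ℕ) else (i : ℕ) + 1 := by
  rcases Nat.lt_or_ge (i : ℕ) (p : ℕ) with h | h
  · rw [Fin.succAbove_of_castSucc_lt _ _ (by simpa [Fin.lt_def] using h)]
    simp [h]
  · rw [Fin.succAbove_of_le_castSucc _ _ (by simpa [Fin.le_def] using h)]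
    simp [Nat.not_lt.2 h]

lemma minor_det (d : ℕ) : ∀ i n, i ≤ n → ∀ p : Fin (n+1), (p : ℕ) = i →
    Matrix.det ((A d (n+1)).submatrix p.succAbove Fin.succ) = Matrix.det (A d (n - i)) := by
  intro i
  induction i with
  | zero =>
    intro n _ p hp
    have hM : (A d (n+1)).submatrix p.succAbove Fin.succ = A d n := by
      ext r c
      have hr : ((p.succAbove r : Fin (n+1)) : ℕ) = (r : ℕ) + 1 := by
        rw [succAbove_val, hp]; simp
      show A d (n+1) (p.succAbove r) (Fin.succ c) = A d n r c
      rw [A_apply, A_apply, hr, Fin.val_succ, e_shift]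
    rw [hM, Nat.sub_zero]
  | succ i ih =>
    intro n hin p hp
    obtain ⟨m, rfl⟩ : ∃ m, n = m + 1 := ⟨n - 1, by omega⟩
    set B := (A d (m+2)).submatrix p.succAbove Fin.succ with hBdef
    have hB00 : B 0 0 = 1 := by
      have h0 : ((p.succAbove 0 : Fin (m+2)) : ℕ) = 0 := by
        rw [succAbove_val, hp]; simp
      show A d (m+2) (p.succAbove 0) (Fin.succ 0) = 1
      rw [A_apply, h0, Fin.val_succ]
      simp [e]
    have hB0 : ∀ j : Fin m, B 0 j.succ = 0 := by
      intro j
      have h0 : ((p.succAbove 0 : Fin (m+2)) : ℕ) = 0 := by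
        rw [succAbove_val, hp]; simp
      show A d (m+2) (p.succAbove 0) (Fin.succ j.succ) = 0
      rw [A_apply, h0, Fin.val_succ, Fin.val_succ]
      simp [e]
    have hq : i ≤ m := by omega
    have hBsub : B.submatrix Fin.succ Fin.succ
        = (A d (m+1)).submatrix (⟨i, by omega⟩ : Fin (m+1)).succAbove Fin.succ := by
      ext r c
      show A d (m+2) (p.succAbove r.succ) (Fin.succ (Fin.succ c))
          = A d (m+1) ((⟨i, by omega⟩ : Fin (m+1)).succAbove r) (Fin.succ c)
      rw [A_apply, A_apply]
      have h1 : ((p.succAbove r.succ : Fin (m+2)) : ℕ)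
          = (((⟨i, by omega⟩ : Fin (m+1)).succAbove r : Fin (m+1)) : ℕ) + 1 := by
        rw [succAbove_val, succAbove_val]
        simp only [Fin.val_succ, Fin.val_mk]
        split_ifs <;> omega
      rw [h1]
      exact e_shift _ _ _
    rw [Matrix.det_succ_row_zero]
    rw [Fin.sum_univ_succ]
    simp only [hB00, hB0, mul_zero, zero_mul, Finset.sum_const_zero, add_zero,
      Fin.val_zero, pow_zero, one_mul, mul_one, Fin.succAbove_zero]
    rw [hBsub, ih m hq ⟨i, by omega⟩ rfl, Nat.succ_sub_succ]

lemma det_rec (d n : ℕ) :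
    (A d (n+1)).det = ∑ i : Fin (n+1),
      (-1 : ℚ)^(i : ℕ) * ((1 : ℚ) / ((((i : ℕ)+1)*d).factorial : ℚ)) * (A d (n - (i : ℕ))).det := by
  rw [Matrix.det_succ_column_zero]
  refine Finset.sum_congr rfl fun i _ => ?_
  rw [minor_det d (i : ℕ) n (by omega) i rfl]
  have hA : A d (n+1) i 0 = (1 : ℚ) / ((((i : ℕ)+1)*d).factorial : ℚ) := by
    rw [A_apply]; simp [e]
  rw [hA]

lemma sum_multiples (d N : ℕ) (hd : 0 < d) (g : ℕ → ℚ) (hg : ∀ k, ¬ d ∣ k → g k = 0) :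
    ∑ k ∈ range (d*N+1), g k = ∑ i ∈ range (N+1), g (d*i) := by
  have h1 : ∑ k ∈ (range (N+1)).image (fun i => d*i), g k = ∑ i ∈ range (N+1), g (d*i) :=
    Finset.sum_image (by intro x _ y _ h; exact Nat.eq_of_mul_eq_mul_left hd h)
  rw [← h1]
  refine (Finset.sum_subset ?_ ?_).symm
  · intro k hk
    simp only [Finset.mem_image, Finset.mem_range] at hk ⊢
    obtain ⟨x, hx, rfl⟩ := hk
    have : d * x ≤ d * N := Nat.mul_le_mul_left d (by omega)
    omega
  · intro k hk hnk
    apply hg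
    rintro ⟨x, rfl⟩
    apply hnk
    simp only [Finset.mem_image, Finset.mem_range] at hk ⊢
    exact ⟨x, by
      have := Nat.le_of_mul_le_mul_left (show d * x ≤ d * N by omega) hd
      omega, rfl⟩

lemma key (d n : ℕ) (hd : 2 ≤ d) (hn : 1 ≤ n) :
    ∑ i ∈ range (n+1), (1 : ℚ)/((d*i).factorial) * PowerSeries.coeff (d*(n-i)) (F d)⁻¹ = 0 := by
  have hunit : PowerSeries.constantCoeff (F d) ≠ 0 := by
    rw [F, PowerSeries.constantCoeff_mk]
    simp
  have hmul := PowerSeries.mul_inv_cancel (F d) hunit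
  have h0 := congrArg (PowerSeries.coeff (d*n)) hmul
  rw [PowerSeries.coeff_mul, PowerSeries.coeff_one,
    if_neg (Nat.mul_ne_zero (by omega) (by omega)),
    Finset.Nat.sum_antidiagonal_eq_sum_range_succ_mk,
    sum_multiples d n (by omega) _
      (fun k hk => by
        have : (PowerSeries.coeff k) (F d) = 0 := by
          rw [F, PowerSeries.coeff_mk, if_neg hk]
        rw [this, zero_mul])] at h0
  rw [← h0]
  refine Finset.sum_congr rfl fun i hi => ?_
  have h1 : (PowerSeries.coeff (d*i)) (F d) = (1 : ℚ)/((d*i).factorial) := by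
    rw [F, PowerSeries.coeff_mk, if_pos (dvd_mul_right d i)]
  have h2 : d*(n-i) = d*n - d*i := Nat.mul_sub d n i
  rw [h1, h2]

lemma main (d : ℕ) (hd : 2 ≤ d) (n : ℕ) :
    PowerSeries.coeff (d*n) (F d)⁻¹ = (-1 : ℚ)^n * (A d n).det := by
  induction n using Nat.strong_induction_on with
  | _ n ih =>
    match n with
    | 0 =>
      rw [mul_zero, PowerSeries.coeff_inv]
      simp [F, PowerSeries.constantCoeff_mk]
    | (m+1) =>
      have hkey := key d (m+1) hd (by omega)
      rw [Finset.sum_range_succ'] at hkey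
      simp only [mul_zero, Nat.factorial_zero, Nat.cast_one, div_one, one_mul,
        Nat.sub_zero, Nat.succ_sub_succ] at hkey
      have hu : PowerSeries.coeff (d*(m+1)) (F d)⁻¹
          = -∑ i ∈ range (m+1),
              (1 : ℚ)/((d*(i+1)).factorial) * PowerSeries.coeff (d*(m-i)) (F d)⁻¹ := by
        linarith [hkey]
      rw [hu, det_rec d m,
        Fin.sum_univ_eq_sum_range
          (fun i => (-1 : ℚ)^i * ((1 : ℚ) / (((i+1)*d).factorial : ℚ)) * (A d (m - i)).det),
        Finset.mul_sum, ← Finset.sum_neg_distrib]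
      refine Finset.sum_congr rfl fun i hi => ?_
      rw [ih (m - i) (by omega)]
      have hile : i ≤ m := by simp only [Finset.mem_range] at hi; omega
      have hsign : (-1 : ℚ)^(m+1) * (-1 : ℚ)^i = -((-1 : ℚ)^(m-i)) := by
        rw [← pow_add]
        have h2 : m+1+i = (2*i + (m-i)) + 1 := by omega
        rw [h2, pow_succ, pow_add, pow_mul]
        simp
      have hcomm : (i+1)*d = d*(i+1) := Nat.mul_comm _ _
      rw [hcomm]
      linear_combination (-((1 : ℚ)/((d*(i+1)).factorial) * (A d (m-i)).det)) * hsign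

end Stmt14Aux

theorem stmt_14 (d n : ℕ) (hd : 2 ≤ d) (hn : 1 ≤ n) :
    genEulerQ d (d * n) =
      (-1 : ℚ) ^ n * ((d * n).factorial : ℚ) *
        Matrix.det (Matrix.of fun i j : Fin n =>
          if (j : ℕ) ≤ (i : ℕ) + 1 then
            (1 : ℚ) / (Nat.factorial (((i : ℕ) + 1 - (j : ℕ)) * d))
          else 0) := by
  have h1 : genEulerQ d (d*n)
      = ((d*n).factorial : ℚ) * PowerSeries.coeff (d*n) (Stmt14Aux.F d)⁻¹ := rfl
  have h2 : (Matrix.of fun i j : Fin n =>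
      if (j : ℕ) ≤ (i : ℕ) + 1 then
        (1 : ℚ) / (Nat.factorial (((i : ℕ) + 1 - (j : ℕ)) * d))
      else 0) = Stmt14Aux.A d n := rfl
  rw [h1, h2, Stmt14Aux.main d hd n]
  ring
end
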